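/- For a shift-invariant probability measure P on Δ^ℤ with causal state distribution μ_C^P, the logarithm of the process dimension dim(P) is at most the logarithm of the cardinality of the support of μ_C^P (the topological statistical complexity): dim(P) ≤ |supp(μ_C^P)| when the support is finite, and log dim(P) ≤ log|supp(μ_C^P)| in general. -/

import Mathlib

open MeasureTheory ProbabilityTheory Filter Topology

variable {Δ : Type*} [Fintype Δ] [MeasurableSpace Δ] [MeasurableSingletonClass Δ]
  [TopologicalSpace Δ] [DiscreteTopology Δ]

/-- The `n`-fold one-sided shift on `Δ^ℕ`. -/
def shiftN (n : ℕ) : (ℕ → Δ) → (ℕ → Δ) := fun x k => x (k + n)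

/-- The cylinder set `[w]` in `Δ^ℕ`. -/
def cylN {n : ℕ} (w : Fin n → Δ) : Set (ℕ → Δ) := {x | ∀ i : Fin n, x (i : ℕ) = w i}

/-- The future `X_ℕ = (X_1, X_2, …)` of a two-sided trajectory. -/
def futureMap : (ℤ → Δ) → (ℕ → Δ) := fun ω n => ω ((n : ℤ) + 1)

/-- The past `(X_0, X_{-1}, …)` of a two-sided trajectory. -/
def pastMap : (ℤ → Δ) → (ℕ → Δ) := fun ω n => ω (-(n : ℤ))

/-- The σ-algebra generated by the past coordinates `X_k`, `k ≤ 0`. -/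
def pastSA (Δ : Type*) [MeasurableSpace Δ] : MeasurableSpace (ℤ → Δ) :=
  MeasurableSpace.comap pastMap MeasurableSpace.pi

/-- `P_ℕ = P ∘ X_ℕ⁻¹`. -/
noncomputable def Pnat (P : Measure (ℤ → Δ)) : Measure (ℕ → Δ) := P.map futureMap

/-- `τ_w(Q)(B) = Q([w] ∩ σ^{-n} B)`. -/
noncomputable def tauMeas (Q : Measure (ℕ → Δ)) {n : ℕ} (w : Fin n → Δ) : Measure (ℕ → Δ) :=
  (Q.restrict (cylN w)).map (shiftN n)

/-- The weak*-realization of a finite measure: the functional `f ↦ ∫ f dμ` on continuous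
functions.  The space `C(X,ℝ) → ℝ` carries the topology of pointwise convergence, so that
convergence of these functionals is exactly weak* convergence of the measures. -/
noncomputable def funcOf {X : Type*} [TopologicalSpace X] [MeasurableSpace X]
    (μ : Measure X) : C(X, ℝ) → ℝ :=
  fun f => ∫ x, f x ∂μ

/-- The canonical OOM vector space `V_P`: the span of the functionals of the measures
`τ_w(P_ℕ)` over all finite words `w` (including the empty word). -/
noncomputable def VP (P : Measure (ℤ → Δ)) : Submodule ℝ (C((ℕ → Δ), ℝ) → ℝ) :=
  Submodule.span ℝ {g | ∃ (n : ℕ) (w : Fin n → Δ), g = funcOf (tauMeas (Pnat P) w)}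

/-- A version of the conditional distribution of the future given the past. -/
noncomputable def condFuture [StandardBorelSpace Δ] (P : Measure (ℤ → Δ)) [IsFiniteMeasure P]
    (ω : ℤ → Δ) : Measure (ℕ → Δ) :=
  ((condExpKernel P (pastSA Δ)) ω).map futureMap

/-- The conditional distribution of the future, as a probability measure. -/
noncomputable def condFutureP [StandardBorelSpace Δ] (P : Measure (ℤ → Δ))
    [IsProbabilityMeasure P] (ω : ℤ → Δ) : ProbabilityMeasure (ℕ → Δ) :=
  ⟨condFuture P ω, by
    have hf : Measurable (futureMap (Δ := Δ)) :=
      measurable_pi_lambda _ fun n => measurable_pi_apply _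
    haveI : IsProbabilityMeasure ((condExpKernel P (pastSA Δ)) ω) :=
      IsMarkovKernel.isProbabilityMeasure ω
    exact Measure.isProbabilityMeasure_map hf.aemeasurable⟩

/-- The causal state distribution `μ_C^P`: the law of the conditional future distribution,
a measure on `P(Δ^ℕ)`. -/
noncomputable def causalDist [StandardBorelSpace Δ]
    [MeasurableSpace (ProbabilityMeasure (ℕ → Δ))]
    (P : Measure (ℤ → Δ)) [IsProbabilityMeasure P] : Measure (ProbabilityMeasure (ℕ → Δ)) :=
  P.map (condFutureP P)

/-- The topological support of a measure. -/
def msupport {X : Type*} [TopologicalSpace X] [MeasurableSpace X] (μ : Measure X) : Set X :=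
  {x | ∀ U : Set X, IsOpen U → x ∈ U → μ U ≠ 0}


/-! ### Auxiliary material -/

section PMSecondCountable

open TopologicalSpace BoundedContinuousFunction

variable {X : Type*} [TopologicalSpace X] [CompactSpace X] [MeasurableSpace X]
  [OpensMeasurableSpace X] [SecondCountableTopology X] [TopologicalSpace.MetrizableSpace X]

set_option linter.unusedSectionVars false in
lemma aux_abs_integral_sub_le_dist (μ : ProbabilityMeasure X) (f g : X →ᵇ ℝ) :
    |∫ x, f x ∂(μ : Measure X) - ∫ x, g x ∂(μ : Measure X)| ≤ dist f g := by
  rw [← integral_sub (f.integrable _) (g.integrable _)]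
  have h1 : (fun x => f x - g x) = fun x => (f - g) x := by
    funext x; simp
  rw [h1]
  calc |∫ x, (f - g) x ∂(μ : Measure X)| = ‖∫ x, (f - g) x ∂(μ : Measure X)‖ := rfl
    _ ≤ ‖f - g‖ := (f - g).norm_integral_le_norm _
    _ = dist f g := by rw [dist_eq_norm]

/-- Evaluation of a probability measure against a countable dense family of continuous
functions. -/
noncomputable def pmEval : ProbabilityMeasure X → (ℕ → ℝ) := fun μ n =>
  haveI : Nonempty C(X, ℝ) := ⟨0⟩
  ∫ x, (denseSeq C(X, ℝ) n) x ∂(μ : Measure X)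

lemma isInducing_pmEval : IsInducing (pmEval (X := X)) := by
  haveI : Nonempty C(X, ℝ) := ⟨0⟩
  have hcont : ∀ n, Continuous fun μ : ProbabilityMeasure X => pmEval μ n := by
    intro n
    have := ProbabilityMeasure.continuous_integral_boundedContinuousFunction
      (X := X) (BoundedContinuousFunction.mkOfCompact (denseSeq C(X, ℝ) n))
    simpa [pmEval] using this
  refine isInducing_iff_nhds.mpr fun μ => le_antisymm ?_ ?_
  · exact (tendsto_iff_comap.mp ((continuous_pi hcont).tendsto μ))
  · have : Tendsto (fun ν : ProbabilityMeasure X => ν) (comap pmEval (𝓝 (pmEval μ))) (𝓝 μ) := by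
      rw [ProbabilityMeasure.tendsto_iff_forall_integral_tendsto]
      intro g
      rw [Metric.tendsto_nhds]
      intro ε hε
      obtain ⟨n, hn⟩ : ∃ n, dist g.toContinuousMap (denseSeq C(X, ℝ) n) < ε / 3 :=
        (denseRange_denseSeq C(X, ℝ)).exists_dist_lt g.toContinuousMap (by linarith)
      have hdist : dist (BoundedContinuousFunction.mkOfCompact (denseSeq C(X, ℝ) n)) g < ε / 3 := by
        have : g = BoundedContinuousFunction.mkOfCompact g.toContinuousMap := by ext x; rfl
        rw [this, BoundedContinuousFunction.dist_mkOfCompact, dist_comm]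
        exact hn
      have hcoord : Tendsto (fun ν : ProbabilityMeasure X => pmEval ν n)
          (comap pmEval (𝓝 (pmEval μ))) (𝓝 (pmEval μ n)) :=
        Tendsto.comp ((continuous_apply n).tendsto (pmEval μ))
          (tendsto_comap (f := pmEval (X := X)))
      have hev : ∀ᶠ ν : ProbabilityMeasure X in comap pmEval (𝓝 (pmEval μ)),
          dist (pmEval ν n) (pmEval μ n) < ε / 3 :=
        hcoord (Metric.ball_mem_nhds _ (by linarith))
      filter_upwards [hev] with ν hν
      have key : ∀ ρ : ProbabilityMeasure X,
          |(∫ x, g x ∂(ρ : Measure X)) - pmEval ρ n| ≤ ε / 3 := by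
        intro ρ
        have he : pmEval ρ n = ∫ x, (BoundedContinuousFunction.mkOfCompact
            (denseSeq C(X, ℝ) n)) x ∂(ρ : Measure X) := rfl
        rw [he]
        calc |(∫ x, g x ∂(ρ : Measure X)) - ∫ x, (BoundedContinuousFunction.mkOfCompact
              (denseSeq C(X, ℝ) n)) x ∂(ρ : Measure X)|
            = |(∫ x, (BoundedContinuousFunction.mkOfCompact (denseSeq C(X, ℝ) n)) x
              ∂(ρ : Measure X)) - ∫ x, g x ∂(ρ : Measure X)| := abs_sub_comm _ _
          _ ≤ dist (BoundedContinuousFunction.mkOfCompact (denseSeq C(X, ℝ) n)) g :=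
              aux_abs_integral_sub_le_dist ρ _ g
          _ ≤ ε / 3 := hdist.le
      have h1 := key ν
      have h2 := key μ
      rw [Real.dist_eq] at hν ⊢
      have t1 := abs_sub_le (∫ x, g x ∂(ν : Measure X)) (pmEval ν n) (∫ x, g x ∂(μ : Measure X))
      have t2 := abs_sub_le (pmEval ν n) (pmEval μ n) (∫ x, g x ∂(μ : Measure X))
      have t3 := abs_sub_comm (pmEval μ n) (∫ x, g x ∂(μ : Measure X))
      linarith
    exact this

lemma aux_secondCountable_PM : SecondCountableTopology (ProbabilityMeasure X) :=
  (isInducing_pmEval (X := X)).secondCountableTopology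

lemma aux_measurable_into_PM [MeasurableSpace (ProbabilityMeasure X)]
    [BorelSpace (ProbabilityMeasure X)]
    {A : Type*} [MeasurableSpace A] (c : A → ProbabilityMeasure X)
    (h : Measurable fun a => pmEval (c a)) : Measurable c := by
  refine measurable_of_isOpen fun V hV => ?_
  obtain ⟨W, hW, rfl⟩ := (isInducing_pmEval (X := X)).isOpen_iff.mp hV
  have : c ⁻¹' (pmEval ⁻¹' W) = (fun a => pmEval (c a)) ⁻¹' W := rfl
  rw [this]
  exact h hW.measurableSet

end PMSecondCountable

section MsupportAux

lemma aux_msupport_compl_eq {Y : Type*} [TopologicalSpace Y] [MeasurableSpace Y]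
    (μ : Measure Y) : (msupport μ)ᶜ = ⋃₀ {U : Set Y | IsOpen U ∧ μ U = 0} := by
  ext x
  simp only [Set.mem_compl_iff, msupport, Set.mem_setOf_eq, Set.mem_sUnion, not_forall]
  constructor
  · rintro ⟨U, hU, hx, hμ⟩
    exact ⟨U, ⟨hU, by simpa using hμ⟩, hx⟩
  · rintro ⟨U, ⟨hU, hμ⟩, hx⟩
    exact ⟨U, hU, hx, by simpa using hμ⟩

lemma aux_msupport_compl_null {Y : Type*} [TopologicalSpace Y] [MeasurableSpace Y]
    [SecondCountableTopology Y] (μ : Measure Y) : μ (msupport μ)ᶜ = 0 := by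
  obtain ⟨T, hTc, hTsub, hTeq⟩ := TopologicalSpace.isOpen_sUnion_countable
    {U : Set Y | IsOpen U ∧ μ U = 0} (fun s hs => hs.1)
  rw [aux_msupport_compl_eq, ← hTeq, measure_sUnion_null_iff hTc]
  exact fun s hs => (hTsub hs).2

lemma aux_isClosed_msupport {Y : Type*} [TopologicalSpace Y] [MeasurableSpace Y]
    (μ : Measure Y) : IsClosed (msupport μ) := by
  rw [← isOpen_compl_iff, aux_msupport_compl_eq]
  exact isOpen_sUnion fun s hs => hs.1
end MsupportAux

section MainAux

variable {Δ : Type*} [Fintype Δ] [MeasurableSpace Δ] [MeasurableSingletonClass Δ]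
  [TopologicalSpace Δ] [DiscreteTopology Δ]

lemma aux_measurable_futureMap : Measurable (futureMap (Δ := Δ)) :=
  measurable_pi_lambda _ fun _ => measurable_pi_apply _
lemma aux_measurable_pastMap : Measurable (pastMap (Δ := Δ)) :=
  measurable_pi_lambda _ fun _ => measurable_pi_apply _
lemma aux_pastSA_le : pastSA Δ ≤ MeasurableSpace.pi :=
  (aux_measurable_pastMap (Δ := Δ)).comap_le
lemma aux_continuous_futureMap : Continuous (futureMap (Δ := Δ)) :=
  continuous_pi fun _ => continuous_apply _
lemma aux_measurable_shiftN (n : ℕ) : Measurable (shiftN n : (ℕ → Δ) → (ℕ → Δ)) :=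
  measurable_pi_lambda _ fun _ => measurable_pi_apply _

lemma aux_measurableSet_cylN {n : ℕ} (w : Fin n → Δ) : MeasurableSet (cylN w) := by
  have : cylN w = ⋂ i : Fin n, (fun x : ℕ → Δ => x (i : ℕ)) ⁻¹' {w i} := by
    ext x; simp [cylN]
  rw [this]
  exact MeasurableSet.iInter fun i => (measurable_pi_apply _) (measurableSet_singleton _)

/-- Measurability of integrals against the conditional future distribution. -/
lemma aux_measurable_integral_condFuture [StandardBorelSpace Δ] (P : Measure (ℤ → Δ))
    [IsProbabilityMeasure P] {g : (ℕ → Δ) → ℝ} (hg : StronglyMeasurable g) :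
    Measurable fun ω => ∫ x, g x ∂(condFuture P ω) := by
  have key : StronglyMeasurable[pastSA Δ]
      (fun ω => ∫ y, g (futureMap y) ∂((condExpKernel P (pastSA Δ)) ω)) := by
    have huncurry : StronglyMeasurable[(pastSA Δ).prod MeasurableSpace.pi]
        (Function.uncurry fun (_ : ℤ → Δ) (y : ℤ → Δ) => g (futureMap y)) := by
      have : Function.uncurry (fun (_ : ℤ → Δ) (y : ℤ → Δ) => g (futureMap y))
          = (g ∘ futureMap) ∘ Prod.snd := rfl
      rw [this]
      exact (hg.comp_measurable aux_measurable_futureMap).comp_measurable measurable_snd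
    exact MeasureTheory.StronglyMeasurable.integral_kernel_prod_right
      (κ := condExpKernel P (pastSA Δ)) huncurry
  have h2 : ∀ ω, ∫ x, g x ∂(condFuture P ω)
      = ∫ y, g (futureMap y) ∂((condExpKernel P (pastSA Δ)) ω) := fun ω =>
    integral_map aux_measurable_futureMap.aemeasurable hg.aestronglyMeasurable
  simp_rw [h2]
  exact ((key.mono (aux_pastSA_le (Δ := Δ))).measurable)

lemma aux_measurable_condFutureP [StandardBorelSpace Δ]
    [MeasurableSpace (ProbabilityMeasure (ℕ → Δ))] [BorelSpace (ProbabilityMeasure (ℕ → Δ))]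
    (P : Measure (ℤ → Δ)) [IsProbabilityMeasure P] : Measurable (condFutureP P) := by
  haveI : Nonempty C((ℕ → Δ), ℝ) := ⟨0⟩
  apply aux_measurable_into_PM
  apply measurable_pi_lambda
  intro n
  have : (fun a => pmEval (condFutureP P a) n)
      = fun ω => ∫ x, (TopologicalSpace.denseSeq C((ℕ → Δ), ℝ) n) x ∂(condFuture P ω) := rfl
  rw [this]
  exact aux_measurable_integral_condFuture P
    ((TopologicalSpace.denseSeq C((ℕ → Δ), ℝ) n).continuous.measurable.stronglyMeasurable)

/-- The past cylinder set. -/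
def Bset (n : ℕ) (w : Fin n → Δ) : Set (ℤ → Δ) := {ω | ∀ i : Fin n, ω ((i : ℤ) + 1 - n) = w i}

lemma aux_measurableSet_Bset_past (n : ℕ) (w : Fin n → Δ) :
    MeasurableSet[pastSA Δ] (Bset n w) := by
  have key : Bset n w = pastMap ⁻¹' {x : ℕ → Δ | ∀ i : Fin n, x (n - 1 - (i : ℕ)) = w i} := by
    ext ω
    simp only [Bset, Set.mem_setOf_eq, Set.mem_preimage, pastMap]
    refine forall_congr' fun i => ?_
    have hi := i.isLt
    have : -((n - 1 - (i : ℕ) : ℕ) : ℤ) = (i : ℤ) + 1 - n := by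
      have h1 : ((n - 1 - (i : ℕ) : ℕ) : ℤ) = (n : ℤ) - 1 - i := by omega
      omega
    rw [this]
  rw [key]
  refine MeasurableSpace.measurableSet_comap.mpr ⟨_, ?_, rfl⟩
  have : {x : ℕ → Δ | ∀ i : Fin n, x (n - 1 - (i : ℕ)) = w i}
      = ⋂ i : Fin n, (fun x : ℕ → Δ => x (n - 1 - (i : ℕ))) ⁻¹' {w i} := by
    ext x; simp
  rw [this]
  exact MeasurableSet.iInter fun i => (measurable_pi_apply _) (measurableSet_singleton _)

/-- The n-fold shift on two-sided trajectories, as a measurable equivalence. -/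
def shiftZE (n : ℕ) : (ℤ → Δ) ≃ᵐ (ℤ → Δ) where
  toFun := fun x k => x (k + n)
  invFun := fun x k => x (k - n)
  left_inv := fun x => by funext k; simp
  right_inv := fun x => by funext k; simp
  measurable_toFun := measurable_pi_lambda _ fun _ => measurable_pi_apply _
  measurable_invFun := measurable_pi_lambda _ fun _ => measurable_pi_apply _

lemma aux_measurePreserving_shiftZE (P : Measure (ℤ → Δ))
    (hP : MeasurePreserving (fun (x : ℤ → Δ) (k : ℤ) => x (k + 1)) P P) (n : ℕ) :
    MeasurePreserving (shiftZE (Δ := Δ) n) P P := by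
  induction n with
  | zero =>
      have : (shiftZE (Δ := Δ) 0 : (ℤ → Δ) → (ℤ → Δ)) = id := by
        funext x; funext k; simp [shiftZE]
      constructor
      · exact (shiftZE (Δ := Δ) 0).measurable
      · rw [this, Measure.map_id]
  | succ m ih =>
      have hcomp : (shiftZE (Δ := Δ) (m + 1) : (ℤ → Δ) → (ℤ → Δ))
          = (shiftZE (Δ := Δ) m : (ℤ → Δ) → (ℤ → Δ))
            ∘ (fun (x : ℤ → Δ) (k : ℤ) => x (k + 1)) := by
        funext x; funext k
        simp only [shiftZE, Function.comp_apply, MeasurableEquiv.coe_mk, Equiv.coe_fn_mk]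
        congr 1
        push_cast
        ring
      constructor
      · exact (shiftZE (Δ := Δ) (m + 1)).measurable
      · rw [hcomp, ← Measure.map_map (shiftZE (Δ := Δ) m).measurable hP.measurable,
          hP.map_eq, ih.map_eq]

/-- Pull the word into the past using stationarity. -/
lemma aux_funcOf_tau_eq_past [StandardBorelSpace Δ] (P : Measure (ℤ → Δ))
    [IsProbabilityMeasure P]
    (hP : MeasurePreserving (fun (x : ℤ → Δ) (k : ℤ) => x (k + 1)) P P)
    {n : ℕ} (w : Fin n → Δ) (f : C((ℕ → Δ), ℝ)) :
    funcOf (tauMeas (Pnat P) w) f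
      = ∫ ω, (Bset n w).indicator (fun ω' => f (futureMap ω')) ω ∂P := by
  have hf : StronglyMeasurable (⇑f) := f.continuous.measurable.stronglyMeasurable
  have step1 : funcOf (tauMeas (Pnat P) w) f
      = ∫ x, (cylN w).indicator (fun x' => f (shiftN n x')) x ∂(Pnat P) := by
    rw [funcOf, tauMeas,
      integral_map (aux_measurable_shiftN n).aemeasurable hf.aestronglyMeasurable,
      ← integral_indicator (aux_measurableSet_cylN w)]
  have step2 : ∫ x, (cylN w).indicator (fun x' => f (shiftN n x')) x ∂(Pnat P)
      = ∫ ω, (cylN w).indicator (fun x' => f (shiftN n x')) (futureMap ω) ∂P := by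
    rw [Pnat, integral_map aux_measurable_futureMap.aemeasurable]
    exact ((hf.comp_measurable (aux_measurable_shiftN n)).indicator
      (aux_measurableSet_cylN w)).aestronglyMeasurable
  have step3 : (fun ω => (cylN w).indicator (fun x' => f (shiftN n x')) (futureMap ω))
      = (fun ω => (Bset n w).indicator (fun ω' => f (futureMap ω')) ω)
        ∘ (shiftZE (Δ := Δ) n) := by
    funext ω
    simp only [Function.comp_apply]
    have hmem : futureMap ω ∈ cylN w ↔ (shiftZE (Δ := Δ) n) ω ∈ Bset n w := by
      simp only [cylN, Bset, Set.mem_setOf_eq, futureMap, shiftZE,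
        MeasurableEquiv.coe_mk, Equiv.coe_fn_mk]
      refine forall_congr' fun i => ?_
      constructor <;> intro h <;> rw [← h] <;> congr 1 <;> ring
    have hval : f (shiftN n (futureMap ω)) = f (futureMap ((shiftZE (Δ := Δ) n) ω)) := by
      congr 1
      funext m
      simp only [shiftN, futureMap, shiftZE, MeasurableEquiv.coe_mk, Equiv.coe_fn_mk]
      congr 1
      push_cast
      ring
    by_cases h : futureMap ω ∈ cylN w
    · rw [Set.indicator_of_mem h, Set.indicator_of_mem (hmem.mp h), hval]
    · rw [Set.indicator_of_notMem h, Set.indicator_of_notMem (fun hc => h (hmem.mpr hc))]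
  rw [step1, step2, step3]
  exact (aux_measurePreserving_shiftZE P hP n).integral_comp
    (shiftZE (Δ := Δ) n).measurableEmbedding _

lemma aux_integrable_comp_futureMap (P : Measure (ℤ → Δ)) [IsProbabilityMeasure P]
    (f : C((ℕ → Δ), ℝ)) : Integrable (fun ω => f (futureMap ω)) P := by
  have : (fun ω => f (futureMap ω))
      = ⇑((BoundedContinuousFunction.mkOfCompact f).compContinuous
          ⟨futureMap, aux_continuous_futureMap⟩) := rfl
  rw [this]
  exact BoundedContinuousFunction.integrable _ _

/-- The conditional expectation step. -/
lemma aux_condexp_step [StandardBorelSpace Δ] (P : Measure (ℤ → Δ)) [IsProbabilityMeasure P]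
    {B : Set (ℤ → Δ)} (hB : MeasurableSet[pastSA Δ] B) (f : C((ℕ → Δ), ℝ)) :
    ∫ ω, B.indicator (fun ω' => f (futureMap ω')) ω ∂P
      = ∫ ω, B.indicator (fun ω' => ∫ x, f x ∂(condFuture P ω')) ω ∂P := by
  have hB' : MeasurableSet B := aux_pastSA_le (Δ := Δ) _ hB
  have hint : Integrable (fun ω => f (futureMap ω)) P := aux_integrable_comp_futureMap P f
  rw [integral_indicator hB', integral_indicator hB',
    ← setIntegral_condExp (aux_pastSA_le (Δ := Δ)) hint hB]
  refine integral_congr_ae (ae_restrict_of_ae ?_)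
  filter_upwards [condExp_ae_eq_integral_condExpKernel (aux_pastSA_le (Δ := Δ)) hint] with ω hω
  rw [hω, condFuture,
    integral_map aux_measurable_futureMap.aemeasurable
      f.continuous.measurable.stronglyMeasurable.aestronglyMeasurable]

/-- In the finite-support case, every generator of `V_P` lies in the span of the functionals
of the causal states. -/
lemma aux_funcOf_tau_mem_span [StandardBorelSpace Δ]
    [MeasurableSpace (ProbabilityMeasure (ℕ → Δ))] [BorelSpace (ProbabilityMeasure (ℕ → Δ))]
    (P : Measure (ℤ → Δ)) [IsProbabilityMeasure P]
    (hP : MeasurePreserving (fun (x : ℤ → Δ) (k : ℤ) => x (k + 1)) P P)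
    (hS : (msupport (causalDist P)).Finite) {n : ℕ} (w : Fin n → Δ) :
    funcOf (tauMeas (Pnat P) w) ∈ Submodule.span ℝ
      ((fun s : ProbabilityMeasure (ℕ → Δ) => funcOf (s : Measure (ℕ → Δ))) ''
        msupport (causalDist P)) := by
  classical
  haveI : SecondCountableTopology (ProbabilityMeasure (ℕ → Δ)) := aux_secondCountable_PM
  set S := msupport (causalDist P) with hSdef
  have hc : Measurable (condFutureP P) := aux_measurable_condFutureP P
  have hSc : MeasurableSet Sᶜ := (aux_isClosed_msupport _).measurableSet.compl
  have hnull : P ((condFutureP P) ⁻¹' Sᶜ) = 0 := by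
    have h0 : causalDist P Sᶜ = 0 := by
      rw [hSdef]; exact aux_msupport_compl_null _
    rwa [show causalDist P = P.map (condFutureP P) from rfl,
      Measure.map_apply hc hSc] at h0
  have hae : ∀ᵐ ω ∂P, condFutureP P ω ∈ S := by
    rw [ae_iff]
    have : {ω | ¬ condFutureP P ω ∈ S} = (condFutureP P) ⁻¹' Sᶜ := rfl
    rw [this]; exact hnull
  have hBcap : ∀ s : ProbabilityMeasure (ℕ → Δ),
      MeasurableSet (Bset n w ∩ (condFutureP P) ⁻¹' {s}) := fun s =>
    (aux_pastSA_le (Δ := Δ) _ (aux_measurableSet_Bset_past n w)).inter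
      (hc (isClosed_singleton.measurableSet))
  have key : funcOf (tauMeas (Pnat P) w)
      = ∑ s ∈ hS.toFinset, (P (Bset n w ∩ (condFutureP P) ⁻¹' {s})).toReal
          • funcOf (s : Measure (ℕ → Δ)) := by
    funext f
    rw [aux_funcOf_tau_eq_past P hP w f, aux_condexp_step P (aux_measurableSet_Bset_past n w) f]
    have haeeq : (fun ω => (Bset n w).indicator (fun ω' => ∫ x, f x ∂(condFuture P ω')) ω)
        =ᵐ[P] fun ω => ∑ s ∈ hS.toFinset,
          (Bset n w ∩ (condFutureP P) ⁻¹' {s}).indicator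
            (fun _ => ∫ x, f x ∂(s : Measure (ℕ → Δ))) ω := by
      filter_upwards [hae] with ω hω
      by_cases hωB : ω ∈ Bset n w
      · rw [Set.indicator_of_mem hωB,
          Finset.sum_eq_single_of_mem (condFutureP P ω) (hS.mem_toFinset.mpr hω)
            (fun s _ hne => Set.indicator_of_notMem
              (fun hmem => hne (Set.mem_singleton_iff.mp hmem.2).symm) _)]
        exact (Set.indicator_of_mem
          (show ω ∈ Bset n w ∩ condFutureP P ⁻¹' {condFutureP P ω} from ⟨hωB, rfl⟩)
          (fun _ => ∫ x, f x ∂((condFutureP P ω : Measure (ℕ → Δ))))).symm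
      · rw [Set.indicator_of_notMem hωB]
        exact (Finset.sum_eq_zero fun s _ =>
          Set.indicator_of_notMem (fun hmem => hωB hmem.1) _).symm
    rw [integral_congr_ae haeeq, integral_finset_sum _
      (fun s _ => (integrable_const _).indicator (hBcap s))]
    have hRHS : (∑ s ∈ hS.toFinset, (P (Bset n w ∩ (condFutureP P) ⁻¹' {s})).toReal
        • funcOf (s : Measure (ℕ → Δ))) f
        = ∑ s ∈ hS.toFinset, (P (Bset n w ∩ (condFutureP P) ⁻¹' {s})).toReal
          * funcOf (s : Measure (ℕ → Δ)) f := by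
      rw [Finset.sum_apply]
      exact Finset.sum_congr rfl fun s _ => rfl
    rw [hRHS]
    refine Finset.sum_congr rfl fun s _ => ?_
    rw [integral_indicator_const _ (hBcap s)]
    rfl
  rw [key]
  exact Submodule.sum_mem _ fun s hs => Submodule.smul_mem _ _
    (Submodule.subset_span ⟨s, hS.mem_toFinset.mp hs, rfl⟩)

/-- The generating family of `V_P` is countable. -/
lemma aux_VP_gen_countable (P : Measure (ℤ → Δ)) :
    Set.Countable {g : C((ℕ → Δ), ℝ) → ℝ |
      ∃ (n : ℕ) (w : Fin n → Δ), g = funcOf (tauMeas (Pnat P) w)} := by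
  have : {g : C((ℕ → Δ), ℝ) → ℝ | ∃ (n : ℕ) (w : Fin n → Δ), g = funcOf (tauMeas (Pnat P) w)}
      = Set.range (fun p : (Σ n : ℕ, Fin n → Δ) => funcOf (tauMeas (Pnat P) p.2)) := by
    ext g
    simp only [Set.mem_setOf_eq, Set.mem_range, Sigma.exists]
    constructor
    · rintro ⟨n, w, rfl⟩; exact ⟨n, w, rfl⟩
    · rintro ⟨n, w, rfl⟩; exact ⟨n, w, rfl⟩
  rw [this]
  exact Set.countable_range _

end MainAux

/-- The process dimension `dim(P)` (the dimension of the canonical OOM vector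
space `V_P`) is at most the number of causal states (the cardinality of the support of the
causal state distribution); equivalently `log dim(P)` is bounded by the topological
statistical complexity `log |supp μ_C^P|`. -/
theorem stmt11 [StandardBorelSpace Δ]
    [MeasurableSpace (ProbabilityMeasure (ℕ → Δ))] [BorelSpace (ProbabilityMeasure (ℕ → Δ))]
    (P : Measure (ℤ → Δ)) [IsProbabilityMeasure P]
    (hP : MeasurePreserving (fun (x : ℤ → Δ) (k : ℤ) => x (k + 1)) P P) :
    Module.rank ℝ (VP P) ≤ Cardinal.mk (msupport (causalDist P)) ∧
    (Set.Finite (msupport (causalDist P)) →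
      Module.rank ℝ (VP P) ≤ (msupport (causalDist P)).ncard) := by
  classical
  have hfin_case : ∀ hS : (msupport (causalDist P)).Finite,
      Module.rank ℝ (VP P) ≤ ((msupport (causalDist P)).ncard : Cardinal) := by
    intro hS
    have hle : VP P ≤ Submodule.span ℝ
        ((fun s : ProbabilityMeasure (ℕ → Δ) => funcOf (s : Measure (ℕ → Δ))) ''
          msupport (causalDist P)) := by
      rw [VP, Submodule.span_le]
      rintro g ⟨n, w, rfl⟩
      exact aux_funcOf_tau_mem_span P hP hS w
    calc Module.rank ℝ (VP P)
        ≤ Module.rank ℝ (Submodule.span ℝ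
          ((fun s : ProbabilityMeasure (ℕ → Δ) => funcOf (s : Measure (ℕ → Δ))) ''
            msupport (causalDist P))) := Submodule.rank_mono hle
      _ ≤ Cardinal.mk ((fun s : ProbabilityMeasure (ℕ → Δ) => funcOf (s : Measure (ℕ → Δ))) ''
            msupport (causalDist P)) := rank_span_le _
      _ ≤ Cardinal.mk (msupport (causalDist P)) := Cardinal.mk_image_le
      _ = ((msupport (causalDist P)).ncard : Cardinal) := by
          haveI := hS.fintype
          rw [Cardinal.mk_fintype, Set.ncard_eq_toFinset_card', Set.toFinset_card]
  have haleph : Module.rank ℝ (VP P) ≤ Cardinal.aleph0 := by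
    calc Module.rank ℝ (VP P)
        ≤ Cardinal.mk {g : C((ℕ → Δ), ℝ) → ℝ |
            ∃ (n : ℕ) (w : Fin n → Δ), g = funcOf (tauMeas (Pnat P) w)} := rank_span_le _
      _ ≤ Cardinal.aleph0 := (aux_VP_gen_countable P).le_aleph0
  constructor
  · by_cases hfin : (msupport (causalDist P)).Finite
    · refine (hfin_case hfin).trans (le_of_eq ?_)
      haveI := hfin.fintype
      rw [Cardinal.mk_fintype, Set.ncard_eq_toFinset_card', Set.toFinset_card]
    · haveI : Infinite (msupport (causalDist P)) := (Set.infinite_coe_iff).mpr hfin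
      exact haleph.trans (Cardinal.aleph0_le_mk _)
  · exact hfin_case
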